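/- arXiv:2306.02672 — 5 statements merged into one kernel-verified Lean document; each statement's English description precedes it below -/
import Mathlib

section
/- For two closed balls of radius r in ℝ^d whose centres are at distance 2ru with 0 ≤ u ≤ 1, the volume of their intersection equals 2·v_{d-1}·r^d·∫₀^{arccos u} (sin θ)^d dθ, where v_{d-1} is the volume of the unit ball in ℝ^{d-1}. -/
open MeasureTheory Metric Real

private lemma lemA' (n : ℕ) (r u : ℝ) (hr : 0 < r) (hu0 : -1 ≤ u) (hu1 : u ≤ 1) :
    ∫ s in (r*u)..r, Real.sqrt (r^2 - s^2) ^ n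
      = r^(n+1) * ∫ θ in (0:ℝ)..Real.arccos u, Real.sin θ ^ (n+1) := by
  have hderiv : ∀ θ ∈ Set.uIcc (0:ℝ) (Real.arccos u),
      HasDerivAt (fun θ => r * Real.cos θ) (r * (-Real.sin θ)) θ :=
    fun θ _ => (Real.hasDerivAt_cos θ).const_mul r
  have hcont : ContinuousOn (fun θ => r * (-Real.sin θ)) (Set.uIcc 0 (Real.arccos u)) := by
    fun_prop
  have hg : Continuous fun s => Real.sqrt (r^2 - s^2) ^ n := by fun_prop
  have key := intervalIntegral.integral_comp_smul_deriv hderiv hcont hg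
  simp only [Real.cos_zero, mul_one, Function.comp, Real.cos_arccos hu0 hu1,
    smul_eq_mul] at key
  rw [intervalIntegral.integral_symm r (r*u), ← key, ← intervalIntegral.integral_neg,
    ← intervalIntegral.integral_const_mul]
  apply intervalIntegral.integral_congr
  intro θ hθ
  rw [Set.uIcc_of_le (Real.arccos_nonneg u)] at hθ
  have h0 : 0 ≤ θ := hθ.1
  have hπ : θ ≤ π := le_trans hθ.2 (Real.arccos_le_pi u)
  have hs : 0 ≤ Real.sin θ := Real.sin_nonneg_of_nonneg_of_le_pi h0 hπ
  have : r^2 - (r * Real.cos θ)^2 = (r * Real.sin θ)^2 := by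
    have := Real.sin_sq_add_cos_sq θ
    nlinarith
  simp only []
  rw [this, Real.sqrt_sq (by positivity)]
  ring

private lemma lemB' (n : ℕ) (hn : 1 ≤ n) (D : ℝ) :
    (volume : Measure (Fin n → ℝ)) {z | ∑ j, z j ^ 2 ≤ D}
      = ENNReal.ofReal (Real.sqrt D ^ n) * volume (ball (0 : EuclideanSpace ℝ (Fin n)) 1) := by
  have e := EuclideanSpace.volume_preserving_symm_measurableEquiv_toLp (Fin n)
  rcases lt_or_ge D 0 with hD | hD
  · have : {z : Fin n → ℝ | ∑ j, z j ^ 2 ≤ D} = ∅ := by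
      ext z
      simp only [Set.mem_setOf_eq, Set.mem_empty_iff_false, iff_false, not_le]
      exact lt_of_lt_of_le hD (by positivity)
    rw [this, measure_empty, Real.sqrt_eq_zero_of_nonpos hD.le,
      zero_pow (by omega), ENNReal.ofReal_zero, zero_mul]
  · have hpre : (MeasurableEquiv.toLp 2 (Fin n → ℝ)).symm ⁻¹' {z | ∑ j, z j ^ 2 ≤ D}
        = closedBall (0 : EuclideanSpace ℝ (Fin n)) (Real.sqrt D) := by
      ext x
      simp only [Set.mem_preimage, Set.mem_setOf_eq, mem_closedBall, dist_zero_right]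
      have hx : (MeasurableEquiv.toLp 2 (Fin n → ℝ)).symm x = fun j => x j := rfl
      rw [hx, EuclideanSpace.norm_eq]
      constructor
      · intro h
        apply Real.sqrt_le_sqrt
        simpa [sq_abs] using h
      · intro h
        have := Real.sqrt_le_sqrt_iff (x := ∑ j, ‖x j‖ ^ 2) (by positivity)
        rw [this] at h
        simpa [sq_abs] using h
    calc (volume : Measure (Fin n → ℝ)) {z | ∑ j, z j ^ 2 ≤ D}
        = volume ((MeasurableEquiv.toLp 2 (Fin n → ℝ)).symm ⁻¹' {z | ∑ j, z j ^ 2 ≤ D}) := by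
          rw [← e.map_eq, MeasurableEquiv.map_apply]
      _ = volume (closedBall (0 : EuclideanSpace ℝ (Fin n)) (Real.sqrt D)) := by rw [hpre]
      _ = ENNReal.ofReal (Real.sqrt D ^ n) * volume (ball (0 : EuclideanSpace ℝ (Fin n)) 1) := by
          rw [Measure.addHaar_closedBall _ _ (Real.sqrt_nonneg D), finrank_euclideanSpace_fin]

private lemma lemC' (n : ℕ) (hn : 1 ≤ n) (r c : ℝ) (hr : 0 < r) (hc : 0 ≤ c) (hcr : c ≤ r) :
    volume (closedBall ((c : ℝ) • EuclideanSpace.single (0 : Fin (n+1)) (1:ℝ)) r ∩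
        closedBall (-((c : ℝ) • EuclideanSpace.single (0 : Fin (n+1)) (1:ℝ))) r)
      = volume (ball (0 : EuclideanSpace ℝ (Fin n)) 1) *
          ENNReal.ofReal (2 * ∫ s in c..r, Real.sqrt (r^2 - s^2) ^ n) := by
  set V := volume (ball (0 : EuclideanSpace ℝ (Fin n)) 1) with hV
  set p : EuclideanSpace ℝ (Fin (n+1)) := (c : ℝ) • EuclideanSpace.single (0 : Fin (n+1)) (1:ℝ) with hp
  set T2 : Set (ℝ × (Fin n → ℝ)) :=
    {q | (q.1 - c)^2 + ∑ j, q.2 j ^ 2 ≤ r^2 ∧ (q.1 + c)^2 + ∑ j, q.2 j ^ 2 ≤ r^2} with hT2def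
  have hcont1 : Continuous fun q : ℝ × (Fin n → ℝ) => (q.1 - c)^2 + ∑ j, q.2 j ^ 2 := by
    apply Continuous.add
    · fun_prop
    · exact continuous_finset_sum _ fun j _ => ((continuous_apply j).comp continuous_snd).pow 2
  have hcont2 : Continuous fun q : ℝ × (Fin n → ℝ) => (q.1 + c)^2 + ∑ j, q.2 j ^ 2 := by
    apply Continuous.add
    · fun_prop
    · exact continuous_finset_sum _ fun j _ => ((continuous_apply j).comp continuous_snd).pow 2
  have hT2 : MeasurableSet T2 := by
    rw [hT2def, Set.setOf_and]
    exact ((isClosed_le hcont1 continuous_const).inter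
      (isClosed_le hcont2 continuous_const)).measurableSet
  have key : ∀ (a : ℝ) (z : EuclideanSpace ℝ (Fin (n+1))),
      dist z ((a : ℝ) • EuclideanSpace.single (0 : Fin (n+1)) (1:ℝ)) ≤ r ↔
        (z 0 - a)^2 + ∑ j : Fin n, z j.succ ^ 2 ≤ r^2 := by
    intro a z
    rw [dist_eq_norm, EuclideanSpace.norm_eq, Real.sqrt_le_left hr.le]
    have : ∀ i, ‖(z - (a : ℝ) • EuclideanSpace.single (0 : Fin (n+1)) (1:ℝ)) i‖^2
        = (z i - (if i = 0 then a else 0))^2 := by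
      intro i
      rw [PiLp.sub_apply, PiLp.smul_apply, EuclideanSpace.single_apply, Real.norm_eq_abs,
        sq_abs, smul_eq_mul]
      congr 2
      split <;> ring
    rw [Finset.sum_congr rfl fun i _ => this i, Fin.sum_univ_succ]
    simp [Fin.succ_ne_zero]
  have hSpre : closedBall p r ∩ closedBall (-p) r
      = (MeasurableEquiv.toLp 2 (Fin (n+1) → ℝ)).symm ⁻¹'
          ((MeasurableEquiv.piFinSuccAbove (fun _ : Fin (n+1) => ℝ) 0) ⁻¹' T2) := by
    ext z
    have hz : (MeasurableEquiv.piFinSuccAbove (fun _ : Fin (n+1) => ℝ) 0)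
        ((MeasurableEquiv.toLp 2 (Fin (n+1) → ℝ)).symm z) = (z 0, fun j : Fin n => z j.succ) := rfl
    simp only [Set.mem_inter_iff, mem_closedBall, Set.mem_preimage, hz, hT2def,
      Set.mem_setOf_eq]
    rw [key c z]
    have hneg : -p = ((-c : ℝ)) • EuclideanSpace.single (0 : Fin (n+1)) (1:ℝ) := by
      rw [hp, neg_smul]
    rw [hneg, key (-c) z]
    constructor
    · rintro ⟨h1, h2⟩; exact ⟨h1, by rw [show z 0 + c = z 0 - -c by ring]; exact h2⟩
    · rintro ⟨h1, h2⟩; exact ⟨h1, by rw [show z 0 - -c = z 0 + c by ring]; exact h2⟩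
  have slice : ∀ t : ℝ, Prod.mk t ⁻¹' T2
      = {z : Fin n → ℝ | ∑ j, z j ^ 2 ≤ r^2 - (|t| + c)^2} := by
    intro t
    ext z
    simp only [Set.mem_preimage, hT2def, Set.mem_setOf_eq]
    rcases le_total 0 t with ht | ht
    · rw [abs_of_nonneg ht]
      constructor
      · rintro ⟨h1, h2⟩; linarith
      · intro h
        have h4 : (t - c)^2 ≤ (t + c)^2 := by nlinarith [mul_nonneg ht hc]
        constructor <;> linarith
    · rw [abs_of_nonpos ht]
      constructor
      · rintro ⟨h1, h2⟩
        have : (-t + c)^2 = (t - c)^2 := by ring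
        linarith [this ▸ h1]
      · intro h
        have h3 : (-t + c)^2 = (t - c)^2 := by ring
        have h4 : (t + c)^2 ≤ (t - c)^2 := by nlinarith [mul_nonneg (neg_nonneg.mpr ht) hc]
        constructor <;> linarith
  set g : ℝ → ℝ := fun t => Real.sqrt (r^2 - (|t| + c)^2) ^ n with hg
  have hgcont : Continuous g := by
    rw [hg]; fun_prop
  have hgzero : ∀ t ∉ Set.Icc (-(r - c)) (r - c), g t = 0 := by
    intro t ht
    have habs : r - c < |t| := by
      by_contra h
      push_neg at h
      exact ht (abs_le.mp h)
    have : r^2 - (|t| + c)^2 < 0 := by nlinarith [abs_nonneg t]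
    rw [hg]
    simp only []
    rw [Real.sqrt_eq_zero_of_nonpos this.le, zero_pow (by omega)]
  have hgint : Integrable g := hgcont.integrable_of_hasCompactSupport
    (HasCompactSupport.intro isCompact_Icc hgzero)
  have hgnn : 0 ≤ g := fun t => by positivity
  have hb : (0:ℝ) ≤ r - c := by linarith
  have hIoi : ∫ s in Set.Ioi (0:ℝ), Real.sqrt (r^2 - (s + c)^2) ^ n
      = ∫ s in c..r, Real.sqrt (r^2 - s^2) ^ n := by
    have hf1 : IntegrableOn (fun s => Real.sqrt (r^2 - (s + c)^2) ^ n) (Set.Ioc 0 (r - c)) := by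
      apply Continuous.integrableOn_Ioc
      fun_prop
    have hf2 : IntegrableOn (fun s => Real.sqrt (r^2 - (s + c)^2) ^ n) (Set.Ioi (r - c)) := by
      apply (integrableOn_congr_fun _ measurableSet_Ioi).mpr (integrableOn_zero)
      intro s hs
      have : r^2 - (s + c)^2 < 0 := by
        simp only [Set.mem_Ioi] at hs
        nlinarith
      show Real.sqrt (r^2 - (s + c)^2) ^ n = (0:ℝ)
      rw [Real.sqrt_eq_zero_of_nonpos this.le, zero_pow (by omega)]
    rw [← Set.Ioc_union_Ioi_eq_Ioi hb,
      setIntegral_union (Set.Ioc_disjoint_Ioi le_rfl) measurableSet_Ioi hf1 hf2]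
    have h0 : ∫ s in Set.Ioi (r - c), Real.sqrt (r^2 - (s + c)^2) ^ n = 0 := by
      apply setIntegral_eq_zero_of_forall_eq_zero
      intro s hs
      have : r^2 - (s + c)^2 < 0 := by
        simp only [Set.mem_Ioi] at hs
        nlinarith
      rw [Real.sqrt_eq_zero_of_nonpos this.le, zero_pow (by omega)]
    rw [h0, add_zero, ← intervalIntegral.integral_of_le hb,
      intervalIntegral.integral_comp_add_right (fun s => Real.sqrt (r^2 - s^2) ^ n) c]
    norm_num
  have hint : ∫ t, g t = 2 * ∫ s in c..r, Real.sqrt (r^2 - s^2) ^ n := by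
    rw [← hIoi]
    exact integral_comp_abs (f := fun s => Real.sqrt (r^2 - (s + c)^2) ^ n)
  calc volume (closedBall p r ∩ closedBall (-p) r)
      = volume ((MeasurableEquiv.piFinSuccAbove (fun _ : Fin (n+1) => ℝ) 0) ⁻¹' T2) := by
        rw [hSpre]
        exact (EuclideanSpace.volume_preserving_symm_measurableEquiv_toLp (Fin (n+1))).measure_preimage
          (((MeasurableEquiv.piFinSuccAbove (fun _ : Fin (n+1) => ℝ) 0).measurable hT2).nullMeasurableSet)
    _ = (volume : Measure (ℝ × (Fin n → ℝ))) T2 :=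
        (volume_preserving_piFinSuccAbove (fun _ : Fin (n+1) => ℝ) 0).measure_preimage
          hT2.nullMeasurableSet
    _ = ∫⁻ t, volume (Prod.mk t ⁻¹' T2) := by
        rw [Measure.volume_eq_prod, Measure.prod_apply hT2]
    _ = ∫⁻ t, ENNReal.ofReal (g t) * V := by
        apply lintegral_congr
        intro t
        rw [slice t, lemB' n hn (r^2 - (|t| + c)^2)]
    _ = (∫⁻ t, ENNReal.ofReal (g t)) * V := by
        rw [lintegral_mul_const]
        exact ENNReal.measurable_ofReal.comp hgcont.measurable
    _ = ENNReal.ofReal (∫ t, g t) * V := by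
        rw [ofReal_integral_eq_lintegral_ofReal hgint (Filter.Eventually.of_forall hgnn)]
    _ = V * ENNReal.ofReal (2 * ∫ s in c..r, Real.sqrt (r^2 - s^2) ^ n) := by
        rw [hint, mul_comm]

theorem stmt_0 (d : ℕ) (hd : 2 ≤ d) (r u : ℝ) (hr : 0 < r) (hu0 : 0 ≤ u) (hu1 : u ≤ 1)
    (x y : EuclideanSpace ℝ (Fin d)) (hxy : dist x y = 2 * r * u) :
    (volume (closedBall x r ∩ closedBall y r)).toReal =
      2 * (volume (ball (0 : EuclideanSpace ℝ (Fin (d - 1))) 1)).toReal * r ^ d *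
        ∫ θ in (0:ℝ)..Real.arccos u, Real.sin θ ^ d := by
  obtain ⟨n, rfl⟩ : ∃ n, d = n + 2 := ⟨d - 2, by omega⟩
  show (volume (closedBall x r ∩ closedBall y r)).toReal =
      2 * (volume (ball (0 : EuclideanSpace ℝ (Fin (n+1))) 1)).toReal * r ^ (n+2) *
        ∫ θ in (0:ℝ)..Real.arccos u, Real.sin θ ^ (n+2)
  set m : EuclideanSpace ℝ (Fin (n + 2)) := (2⁻¹ : ℝ) • (x + y) with hm
  set w : EuclideanSpace ℝ (Fin (n + 2)) := (2⁻¹ : ℝ) • (x - y) with hw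
  -- translation
  have htrans : volume (closedBall x r ∩ closedBall y r)
      = volume (closedBall w r ∩ closedBall (-w) r) := by
    have hmp : MeasurePreserving (fun z : EuclideanSpace ℝ (Fin (n + 2)) => z + m) volume volume :=
      measurePreserving_add_right volume m
    rw [← hmp.measure_preimage
      ((measurableSet_closedBall.inter measurableSet_closedBall).nullMeasurableSet)]
    congr 1
    ext z
    have h1 : dist (z + m) x = dist z (x - m) := by
      rw [dist_eq_norm, dist_eq_norm]
      congr 1
      abel
    have h2 : dist (z + m) y = dist z (y - m) := by
      rw [dist_eq_norm, dist_eq_norm]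
      congr 1
      abel
    have hxm : x - m = w := by rw [hm, hw]; module
    have hym : y - m = -w := by rw [hm, hw]; module
    simp only [Set.mem_preimage, Set.mem_inter_iff, mem_closedBall, h1, h2, hxm, hym]
  -- rotation
  set c : ℝ := r * u with hc
  have hc0 : 0 ≤ c := by positivity
  have hcr : c ≤ r := by
    calc r * u ≤ r * 1 := by nlinarith
    _ = r := mul_one r
  set p : EuclideanSpace ℝ (Fin (n + 2)) := (c : ℝ) • EuclideanSpace.single (0 : Fin (n+2)) (1:ℝ) with hp
  have hnormw : ‖w‖ = c := by
    rw [hw, norm_smul, ← dist_eq_norm, hxy]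
    simp [hc]
    ring
  have hnormp : ‖p‖ = c := by
    rw [hp, norm_smul, EuclideanSpace.norm_single]
    simp [abs_of_nonneg hc0]
  have href : Submodule.reflection (ℝ ∙ (p - w))ᗮ p = w := Submodule.reflection_sub (by rw [hnormp, hnormw])
  set G := Submodule.reflection (ℝ ∙ (p - w))ᗮ with hG
  have hrot : volume (closedBall w r ∩ closedBall (-w) r)
      = volume (closedBall p r ∩ closedBall (-p) r) := by
    have hgm : MeasurePreserving G volume volume := G.measurePreserving
    rw [← hgm.measure_preimage
      ((measurableSet_closedBall.inter measurableSet_closedBall).nullMeasurableSet)]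
    congr 1
    ext z
    simp only [Set.mem_preimage, Set.mem_inter_iff, mem_closedBall, dist_eq_norm]
    rw [← href, show G z - G p = G (z - p) from (map_sub G z p).symm,
      show G z - -G p = G (z + p) by rw [← map_neg, ← map_sub, sub_neg_eq_add],
      G.norm_map, G.norm_map, show z + p = z - -p by rw [sub_neg_eq_add]]
  rw [htrans, hrot, lemC' (n+1) (by omega) r c hr hc0 hcr,
    ENNReal.toReal_mul, ENNReal.toReal_ofReal, hc,
    lemA' (n+1) r u hr (by linarith) hu1]
  · rw [show n+1+1 = n+2 by omega]
    set J := ∫ θ in (0:ℝ)..Real.arccos u, Real.sin θ ^ (n+2) with hJ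
    ring
  · have : 0 ≤ ∫ s in c..r, Real.sqrt (r^2 - s^2) ^ (n+1) := by
      apply intervalIntegral.integral_nonneg hcr
      intro s _
      positivity
    rw [hc] at this
    positivity
end

section
/- In ℝ², if four points are pairwise at distance at least 2r and the four closed balls of radius R centred at them have a common point, then R ≥ √2·r; moreover, for the vertices of a square of side 2r this bound is attained at the centre. -/
open Metric

/-- Four planar vectors cannot have all pairwise inner products negative. -/
lemma stmt_6_key (a1 b1 a2 b2 a3 b3 a4 b4 : ℝ)
    (h12 : a1*a2+b1*b2 < 0) (h13 : a1*a3+b1*b3 < 0) (h14 : a1*a4+b1*b4 < 0)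
    (h23 : a2*a3+b2*b3 < 0) (h24 : a2*a4+b2*b4 < 0) (h34 : a3*a4+b3*b4 < 0) : False := by
  have h1 : 0 < a1^2 + b1^2 := by
    rcases lt_or_ge 0 (a1^2+b1^2) with h | h
    · exact h
    · have ha : a1 = 0 ∧ b1 = 0 := by constructor <;> nlinarith [sq_nonneg a1, sq_nonneg b1]
      rw [ha.1, ha.2] at h12; linarith
  set B2 := a1*b2 - b1*a2 with hB2
  set B3 := a1*b3 - b1*a3 with hB3
  set B4 := a1*b4 - b1*a4 with hB4
  have e23 : (a2*a3+b2*b3)*(a1^2+b1^2) = (a1*a2+b1*b2)*(a1*a3+b1*b3) + B2*B3 := by ring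
  have e24 : (a2*a4+b2*b4)*(a1^2+b1^2) = (a1*a2+b1*b2)*(a1*a4+b1*b4) + B2*B4 := by ring
  have e34 : (a3*a4+b3*b4)*(a1^2+b1^2) = (a1*a3+b1*b3)*(a1*a4+b1*b4) + B3*B4 := by ring
  have n23 : B2*B3 < 0 := by nlinarith [mul_pos_of_neg_of_neg h12 h13, mul_neg_of_neg_of_pos h23 h1]
  have n24 : B2*B4 < 0 := by nlinarith [mul_pos_of_neg_of_neg h12 h14, mul_neg_of_neg_of_pos h24 h1]
  have n34 : B3*B4 < 0 := by nlinarith [mul_pos_of_neg_of_neg h13 h14, mul_neg_of_neg_of_pos h34 h1]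
  nlinarith [mul_pos_of_neg_of_neg n23 n24, sq_nonneg (B2*B3*B4), sq_nonneg B2]

lemma stmt_6_dist_two (x y : EuclideanSpace ℝ (Fin 2)) :
    dist x y = Real.sqrt ((x 0 - y 0)^2 + (x 1 - y 1)^2) := by
  rw [EuclideanSpace.dist_eq]
  simp [Fin.sum_univ_two, Real.dist_eq, sq_abs]

lemma stmt_6_dist_sq_two (x y : EuclideanSpace ℝ (Fin 2)) :
    dist x y ^ 2 = (x 0 - y 0)^2 + (x 1 - y 1)^2 := by
  rw [stmt_6_dist_two, Real.sq_sqrt (by positivity)]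

lemma stmt_6_sqrt_eq_of_sq (x t : ℝ) (ht : 0 ≤ t) (h : x = t^2) : Real.sqrt x = t := by
  rw [h, Real.sqrt_sq ht]

set_option linter.unreachableTactic false in
theorem stmt_6 (r R : ℝ) (hr : 0 < r) (hR : 0 < R) :
    (∀ x : Fin 4 → EuclideanSpace ℝ (Fin 2),
        (∀ i j, i ≠ j → 2 * r ≤ dist (x i) (x j)) →
        ∀ p, (∀ i, p ∈ closedBall (x i) R) → Real.sqrt 2 * r ≤ R) ∧
      (∃ y : Fin 4 → EuclideanSpace ℝ (Fin 2),
        dist (y 0) (y 1) = 2 * r ∧ dist (y 1) (y 2) = 2 * r ∧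
        dist (y 2) (y 3) = 2 * r ∧ dist (y 3) (y 0) = 2 * r ∧
        dist (y 0) (y 2) = 2 * Real.sqrt 2 * r ∧ dist (y 1) (y 3) = 2 * Real.sqrt 2 * r ∧
        ∃ c, ∀ i, dist c (y i) = Real.sqrt 2 * r) := by
  constructor
  · intro x hx p hp
    by_contra hcon
    push_neg at hcon
    have hR2 : R^2 < 2*r^2 := by
      have h2 : (Real.sqrt 2 * r)^2 = 2*r^2 := by
        rw [mul_pow, Real.sq_sqrt (by norm_num : (0:ℝ) ≤ 2)]
      calc R^2 < (Real.sqrt 2 * r)^2 := pow_lt_pow_left₀ hcon hR.le (by norm_num)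
        _ = 2*r^2 := h2
    set a : Fin 4 → ℝ := fun i => x i 0 - p 0 with ha
    set b : Fin 4 → ℝ := fun i => x i 1 - p 1 with hb
    have hi : ∀ i, (a i)^2 + (b i)^2 ≤ R^2 := by
      intro i
      have h1 := (mem_closedBall.mp (hp i))
      have h2 : dist p (x i) ^ 2 ≤ R^2 := by nlinarith [dist_nonneg (x := p) (y := x i)]
      rw [stmt_6_dist_sq_two] at h2
      simp only [ha, hb]
      nlinarith [h2]
    have hij : ∀ i j, i ≠ j → a i * a j + b i * b j < 0 := by
      intro i j hne
      have h1 := hx i j hne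
      have h2 : 4*r^2 ≤ dist (x i) (x j) ^ 2 := by nlinarith
      rw [stmt_6_dist_sq_two] at h2
      have e1 : x i 0 - x j 0 = a i - a j := by simp [ha]
      have e2 : x i 1 - x j 1 = b i - b j := by simp [hb]
      rw [e1, e2] at h2
      nlinarith [hi i, hi j]
    exact stmt_6_key (a 0) (b 0) (a 1) (b 1) (a 2) (b 2) (a 3) (b 3)
      (hij 0 1 (by decide)) (hij 0 2 (by decide)) (hij 0 3 (by decide))
      (hij 1 2 (by decide)) (hij 1 3 (by decide)) (hij 2 3 (by decide))
  · have h2 : Real.sqrt 2 ^ 2 = 2 := Real.sq_sqrt (by norm_num)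
    refine ⟨fun i => (WithLp.equiv 2 (Fin 2 → ℝ)).symm
        (![![0,0],![2*r,0],![2*r,2*r],![0,2*r]] i), ?_, ?_, ?_, ?_, ?_, ?_,
        ⟨(WithLp.equiv 2 (Fin 2 → ℝ)).symm ![r,r], ?_⟩⟩
    · rw [stmt_6_dist_two]
      beta_reduce
      simp only [WithLp.equiv_symm_apply, PiLp.toLp_apply]
      norm_num [Matrix.vecHead, Matrix.vecTail]
      refine stmt_6_sqrt_eq_of_sq _ _ (by positivity) ?_
      first | ring1 | linear_combination (-4*r^2)*h2 | linear_combination (-r^2)*h2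
    · rw [stmt_6_dist_two]
      beta_reduce
      simp only [WithLp.equiv_symm_apply, PiLp.toLp_apply, Matrix.cons_val]
      norm_num [Matrix.vecHead, Matrix.vecTail]
      refine stmt_6_sqrt_eq_of_sq _ _ (by positivity) ?_
      first | ring1 | linear_combination (-4*r^2)*h2 | linear_combination (-r^2)*h2
    · rw [stmt_6_dist_two]
      beta_reduce
      simp only [WithLp.equiv_symm_apply, PiLp.toLp_apply, Matrix.cons_val]
      norm_num [Matrix.vecHead, Matrix.vecTail]
      refine stmt_6_sqrt_eq_of_sq _ _ (by positivity) ?_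
      first | ring1 | linear_combination (-4*r^2)*h2 | linear_combination (-r^2)*h2
    · rw [stmt_6_dist_two]
      beta_reduce
      simp only [WithLp.equiv_symm_apply, PiLp.toLp_apply, Matrix.cons_val]
      norm_num [Matrix.vecHead, Matrix.vecTail]
      refine stmt_6_sqrt_eq_of_sq _ _ (by positivity) ?_
      first | ring1 | linear_combination (-4*r^2)*h2 | linear_combination (-r^2)*h2
    · rw [stmt_6_dist_two]
      beta_reduce
      simp only [WithLp.equiv_symm_apply, PiLp.toLp_apply, Matrix.cons_val]
      norm_num [Matrix.vecHead, Matrix.vecTail]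
      refine stmt_6_sqrt_eq_of_sq _ _ (by positivity) ?_
      first | ring1 | linear_combination (-4*r^2)*h2 | linear_combination (-r^2)*h2
    · rw [stmt_6_dist_two]
      beta_reduce
      simp only [WithLp.equiv_symm_apply, PiLp.toLp_apply, Matrix.cons_val]
      norm_num [Matrix.vecHead, Matrix.vecTail]
      refine stmt_6_sqrt_eq_of_sq _ _ (by positivity) ?_
      first | ring1 | linear_combination (-4*r^2)*h2 | linear_combination (-r^2)*h2
    · intro i
      fin_cases i <;>
      · rw [stmt_6_dist_two]
        beta_reduce
        simp only [WithLp.equiv_symm_apply, PiLp.toLp_apply]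
        norm_num [Matrix.vecHead, Matrix.vecTail]
        refine stmt_6_sqrt_eq_of_sq _ _ (by positivity) ?_
        first | ring1 | linear_combination (-4*r^2)*h2 | linear_combination (-r^2)*h2
end

section
/- In ℝ^d with d ≥ 3, if four points are pairwise at distance at least 2r and the four closed balls of radius R centred at them have a common point, then R ≥ √(3/2)·r; moreover, for the vertices of a regular tetrahedron of side-length 2r this bound is attained at the centroid. -/
open Metric

lemma sum_first_three {d : ℕ} (hd : 3 ≤ d) (g : Fin d → ℝ)
    (hg : ∀ k : Fin d, 3 ≤ (k : ℕ) → g k = 0) :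
    ∑ k, g k = g ⟨0, by omega⟩ + g ⟨1, by omega⟩ + g ⟨2, by omega⟩ := by
  rw [← Finset.sum_subset (Finset.subset_univ
      ({⟨0, by omega⟩, ⟨1, by omega⟩, ⟨2, by omega⟩} : Finset (Fin d)))]
  · rw [Finset.sum_insert (by simp [Fin.ext_iff]), Finset.sum_insert (by simp [Fin.ext_iff]),
      Finset.sum_singleton, add_assoc]
  · intro k _ hk
    apply hg
    simp [Finset.mem_insert, Fin.ext_iff] at hk
    omega

def tetA : Fin 4 → Fin 3 → ℝ := ![![1,1,1], ![1,-1,-1], ![-1,1,-1], ![-1,-1,1]]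

lemma tetA_pair (r s : ℝ) (hs2 : s ^ 2 = r ^ 2 / 2) (i j : Fin 4) (hij : i ≠ j) :
    (s * tetA i 0 - s * tetA j 0)^2 + (s * tetA i 1 - s * tetA j 1)^2
      + (s * tetA i 2 - s * tetA j 2)^2 = 4 * r ^ 2 := by
  fin_cases i <;> fin_cases j <;>
    first
    | exact absurd rfl hij
    | (norm_num [tetA, Matrix.cons_val_zero, Matrix.cons_val_one, Matrix.head_cons,
        Matrix.cons_val_two, Matrix.cons_val_three, Matrix.vecHead, Matrix.vecTail]
       linear_combination 8 * hs2)

lemma tetA_norm (r s : ℝ) (hs2 : s ^ 2 = r ^ 2 / 2) (i : Fin 4) :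
    (s * tetA i 0)^2 + (s * tetA i 1)^2 + (s * tetA i 2)^2 = 3 / 2 * r ^ 2 := by
  fin_cases i <;>
    (norm_num [tetA, Matrix.cons_val_zero, Matrix.cons_val_one, Matrix.head_cons,
        Matrix.cons_val_two, Matrix.cons_val_three, Matrix.vecHead, Matrix.vecTail]
     linear_combination 3 * hs2)

theorem stmt_7 (d : ℕ) (hd : 3 ≤ d) (r R : ℝ) (hr : 0 < r) (hR : 0 < R) :
    (∀ x : Fin 4 → EuclideanSpace ℝ (Fin d),
        (∀ i j, i ≠ j → 2 * r ≤ dist (x i) (x j)) →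
        ∀ p, (∀ i, p ∈ closedBall (x i) R) → Real.sqrt (3 / 2) * r ≤ R) ∧
      (∃ y : Fin 4 → EuclideanSpace ℝ (Fin d),
        (∀ i j, i ≠ j → dist (y i) (y j) = 2 * r) ∧
        ∃ c, ∀ i, dist c (y i) = Real.sqrt (3 / 2) * r) := by
  constructor
  · intro x hx p hp
    set a : Fin 4 → EuclideanSpace ℝ (Fin d) := fun i => x i - p with ha
    have hb : ∀ i, ‖a i‖ ≤ R := fun i => by
      have := hp i
      rw [mem_closedBall, dist_comm, dist_eq_norm] at this
      simpa [a] using this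
    have hpair : ∀ i j, i ≠ j → 4 * r ^ 2 ≤ ‖a i - a j‖ ^ 2 := by
      intro i j hij
      have h := hx i j hij
      have : a i - a j = x i - x j := by simp [a]
      rw [this, ← dist_eq_norm]
      nlinarith [dist_nonneg (x := x i) (y := x j)]
    have expand : ∀ u v : EuclideanSpace ℝ (Fin d),
        ‖u - v‖ ^ 2 = ‖u‖ ^ 2 - 2 * inner ℝ u v + ‖v‖ ^ 2 := fun u v => norm_sub_sq_real u v
    have esum : ‖a 0 + a 1 + a 2 + a 3‖ ^ 2 =
        ‖a 0‖^2 + ‖a 1‖^2 + ‖a 2‖^2 + ‖a 3‖^2 +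
        2 * (inner ℝ (a 0) (a 1) + inner ℝ (a 0) (a 2) + inner ℝ (a 0) (a 3)
          + inner ℝ (a 1) (a 2) + inner ℝ (a 1) (a 3) + inner ℝ (a 2) (a 3) : ℝ) := by
      simp only [← real_inner_self_eq_norm_sq, inner_add_left, inner_add_right]
      rw [real_inner_comm (a 1) (a 0), real_inner_comm (a 2) (a 0),
        real_inner_comm (a 2) (a 1), real_inner_comm (a 3) (a 0),
        real_inner_comm (a 3) (a 1), real_inner_comm (a 3) (a 2)]
      ring
    have hsq : 3 / 2 * r ^ 2 ≤ R ^ 2 := by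
      nlinarith [hpair 0 1 (by decide), hpair 0 2 (by decide), hpair 0 3 (by decide),
        hpair 1 2 (by decide), hpair 1 3 (by decide), hpair 2 3 (by decide),
        expand (a 0) (a 1), expand (a 0) (a 2), expand (a 0) (a 3),
        expand (a 1) (a 2), expand (a 1) (a 3), expand (a 2) (a 3),
        esum, sq_nonneg ‖a 0 + a 1 + a 2 + a 3‖,
        hb 0, hb 1, hb 2, hb 3, norm_nonneg (a 0), norm_nonneg (a 1),
        norm_nonneg (a 2), norm_nonneg (a 3), hR.le]
    calc Real.sqrt (3 / 2) * r = Real.sqrt (3 / 2 * r ^ 2) := by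
          rw [Real.sqrt_mul (by norm_num), Real.sqrt_sq hr.le]
      _ ≤ Real.sqrt (R ^ 2) := Real.sqrt_le_sqrt hsq
      _ = R := Real.sqrt_sq hR.le
  · have hs2 : (r / Real.sqrt 2) ^ 2 = r ^ 2 / 2 := by
      rw [div_pow, Real.sq_sqrt (by norm_num)]
    set s : ℝ := r / Real.sqrt 2 with hs
    set Y : Fin 4 → EuclideanSpace ℝ (Fin d) := fun i =>
      WithLp.toLp 2 (fun (k : Fin d) => if (k : ℕ) = 0 then s * tetA i 0 else if (k : ℕ) = 1 then s * tetA i 1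
        else if (k : ℕ) = 2 then s * tetA i 2 else 0) with hY
    have hYval : ∀ i j, ∑ k : Fin d, dist (Y i k) (Y j k) ^ 2
        = (s * tetA i 0 - s * tetA j 0)^2 + (s * tetA i 1 - s * tetA j 1)^2
          + (s * tetA i 2 - s * tetA j 2)^2 := by
      intro i j
      rw [sum_first_three hd]
      · norm_num [hY, Real.dist_eq, sq_abs]
      · intro k hk
        simp only [hY, WithLp.ofLp_toLp]
        rw [if_neg (by omega), if_neg (by omega), if_neg (by omega),
          if_neg (by omega), if_neg (by omega), if_neg (by omega)]
        simp
    have hYnorm : ∀ i, ∑ k : Fin d, dist ((0 : EuclideanSpace ℝ (Fin d)) k) (Y i k) ^ 2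
        = (s * tetA i 0)^2 + (s * tetA i 1)^2 + (s * tetA i 2)^2 := by
      intro i
      rw [sum_first_three hd]
      · norm_num [hY, Real.dist_eq, sq_abs] <;> simp only [pow_two, ← abs_mul, abs_mul_self]
      · intro k hk
        simp only [hY, WithLp.ofLp_toLp]
        rw [if_neg (by omega), if_neg (by omega), if_neg (by omega)]
        simp
    refine ⟨Y, ?_, 0, ?_⟩
    · intro i j hij
      rw [EuclideanSpace.dist_eq, hYval i j, tetA_pair r s hs2 i j hij]
      rw [show (4 : ℝ) * r ^ 2 = (2*r)^2 by ring, Real.sqrt_sq (by positivity)]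
    · intro i
      rw [EuclideanSpace.dist_eq, hYnorm i, tetA_norm r s hs2 i,
        Real.sqrt_mul (by norm_num), Real.sqrt_sq hr.le]
end

section
/- Let E be a finite measure space with measure λ, E: X → ℝ a measurable function bounded below with essential infimum E* = inf over the support, and suppose λ({x : E(x) ≤ E* + η}) > 0 for every η > 0. Define the Gibbs measures μ_z(A) = (∫_A e^{−zE} dλ)/(∫ e^{−zE} dλ). Then for all ε, η > 0 there exists z* such that for all z > z*, μ_z({x : E(x) ≤ E* + η}) ≥ 1 − ε. -/
open MeasureTheory

theorem stmt_15 {X : Type*} [MeasurableSpace X] (lam : Measure X) [IsFiniteMeasure lam]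
    (hlam : lam ≠ 0) (E : X → ℝ) (hE : Measurable E) (Estar : ℝ)
    (hlower : ∀ᵐ x ∂lam, Estar ≤ E x)
    (hpos : ∀ η : ℝ, 0 < η → 0 < lam {x | E x ≤ Estar + η}) :
    ∀ ε : ℝ, 0 < ε → ∀ η : ℝ, 0 < η → ∃ zstar : ℝ, 0 < zstar ∧ ∀ z : ℝ, zstar < z →
      1 - ε ≤ (∫ x in {x | E x ≤ Estar + η}, Real.exp (-(z * E x)) ∂lam) /
        (∫ x, Real.exp (-(z * E x)) ∂lam) := by
  intro ε hε η hη
  set A : Set X := {x | E x ≤ Estar + η} with hAdef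
  set A' : Set X := {x | E x ≤ Estar + η / 2} with hA'def
  have hA : MeasurableSet A := hE measurableSet_Iic
  have hA' : MeasurableSet A' := hE measurableSet_Iic
  set c : ℝ := (lam A').toReal with hcdef
  have hc : 0 < c :=
    ENNReal.toReal_pos (hpos (η / 2) (by linarith)).ne' (measure_ne_top lam A')
  set M : ℝ := (lam Set.univ).toReal with hMdef
  have hM : 0 < M :=
    ENNReal.toReal_pos (by simpa [Measure.measure_univ_pos] using hlam)
      (measure_ne_top lam _)
  refine ⟨max 1 ((2 / η) * Real.log (M / (ε * c))), lt_of_lt_of_le one_pos (le_max_left _ _), ?_⟩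
  intro z hz
  have hz0 : (0:ℝ) < z := lt_of_lt_of_le one_pos (le_max_left _ _) |>.trans hz
  have hzlog : Real.log (M / (ε * c)) < z * η / 2 := by
    have h1 : (2 / η) * Real.log (M / (ε * c)) < z := (le_max_right _ _).trans_lt hz
    have h3 : Real.log (M / (ε * c)) = 2 / η * Real.log (M / (ε * c)) * (η / 2) := by
      field_simp
    nlinarith [mul_lt_mul_of_pos_right h1 (by positivity : (0:ℝ) < η / 2)]
  have hkey : Real.exp (-(z * η / 2)) * M ≤ ε * c := by
    have hx : 0 < M / (ε * c) := by positivity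
    have := Real.exp_lt_exp.mpr hzlog
    rw [Real.exp_log hx] at this
    rw [div_lt_iff₀ (by positivity : (0:ℝ) < ε * c)] at this
    rw [Real.exp_neg, inv_mul_le_iff₀ (Real.exp_pos _)]
    exact this.le
  -- integrability
  have hint : Integrable (fun x => Real.exp (-(z * E x))) lam := by
    refine Integrable.mono' (integrable_const (Real.exp (-(z * Estar)))) ?_ ?_
    · exact ((hE.const_mul z).neg.exp).aestronglyMeasurable
    · filter_upwards [hlower] with x hx
      rw [Real.norm_eq_abs, abs_of_pos (Real.exp_pos _)]
      exact Real.exp_le_exp.mpr (by nlinarith)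
  -- lower bound on A'
  have hlowA' : Real.exp (-(z * (Estar + η / 2))) * c ≤ ∫ x in A', Real.exp (-(z * E x)) ∂lam := by
    have h := setIntegral_mono_on (integrable_const (Real.exp (-(z * (Estar + η / 2))))).integrableOn
      hint.integrableOn hA' (fun x hx => Real.exp_le_exp.mpr (by
        have : E x ≤ Estar + η / 2 := hx
        nlinarith))
    rwa [setIntegral_const, smul_eq_mul, mul_comm] at h
  -- total integral is positive
  have hI_lower : Real.exp (-(z * (Estar + η / 2))) * c ≤ ∫ x, Real.exp (-(z * E x)) ∂lam := by
    refine hlowA'.trans (setIntegral_le_integral hint ?_)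
    filter_upwards with x using (Real.exp_pos _).le
  have hI_pos : 0 < ∫ x, Real.exp (-(z * E x)) ∂lam :=
    lt_of_lt_of_le (by positivity) hI_lower
  -- upper bound on Aᶜ
  have hupp : ∫ x in Aᶜ, Real.exp (-(z * E x)) ∂lam ≤ Real.exp (-(z * (Estar + η))) * M := by
    have h := setIntegral_mono_on hint.integrableOn
      (integrable_const (Real.exp (-(z * (Estar + η))))).integrableOn hA.compl
      (fun x hx => Real.exp_le_exp.mpr (by
        have hx' : Estar + η < E x := lt_of_not_ge hx
        nlinarith))
    rw [setIntegral_const, smul_eq_mul, mul_comm] at h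
    refine h.trans (mul_le_mul_of_nonneg_left ?_ (Real.exp_pos _).le)
    exact ENNReal.toReal_mono (measure_ne_top lam _) (measure_mono (Set.subset_univ _))
  have hsplit : (∫ x in A, Real.exp (-(z * E x)) ∂lam) + (∫ x in Aᶜ, Real.exp (-(z * E x)) ∂lam)
      = ∫ x, Real.exp (-(z * E x)) ∂lam := integral_add_compl hA hint
  rw [le_div_iff₀ hI_pos]
  -- key: ∫_Aᶜ ≤ ε * ∫
  have hcompl : ∫ x in Aᶜ, Real.exp (-(z * E x)) ∂lam ≤ ε * ∫ x, Real.exp (-(z * E x)) ∂lam := by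
    have hsplitexp : Real.exp (-(z * (Estar + η))) =
        Real.exp (-(z * (Estar + η / 2))) * Real.exp (-(z * η / 2)) := by
      rw [← Real.exp_add]; ring_nf
    calc ∫ x in Aᶜ, Real.exp (-(z * E x)) ∂lam
        ≤ Real.exp (-(z * (Estar + η))) * M := hupp
      _ = Real.exp (-(z * (Estar + η / 2))) * (Real.exp (-(z * η / 2)) * M) := by
          rw [hsplitexp]; ring
      _ ≤ Real.exp (-(z * (Estar + η / 2))) * (ε * c) := by
          gcongr
      _ = ε * (Real.exp (-(z * (Estar + η / 2))) * c) := by ring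
      _ ≤ ε * ∫ x, Real.exp (-(z * E x)) ∂lam := by gcongr
  nlinarith [hsplit, hcompl, hI_pos]
end

section
/- Let W be a standard d-dimensional Brownian motion on [0,1]. For every ε > 0 and δ ∈ (0,1], the probability that the δ-modulus of continuity of W on [0,1] exceeds ε is at most 4√5·(d/δ)·exp(−ε²/(10d·δ)). -/
open MeasureTheory ProbabilityTheory Set

/-- A standard `d`-dimensional Brownian motion on `[0,∞)` under the probability
measure `P`: it starts at `0`, has a.s. continuous paths, and its increments over
disjoint time intervals have independent coordinates, each coordinate increment
being a centred Gaussian with variance equal to the length of the time interval. -/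
def IsStdBrownianMotion (d : ℕ) {Ω : Type*} [MeasurableSpace Ω] (P : Measure Ω)
    (X : ℝ → Ω → EuclideanSpace ℝ (Fin d)) : Prop :=
  (∀ᵐ ω ∂P, X 0 ω = 0) ∧
  (∀ᵐ ω ∂P, Continuous fun t => X t ω) ∧
  (∀ t : ℝ, Measurable (X t)) ∧
  (∀ s t : ℝ, 0 ≤ s → s ≤ t → ∀ i : Fin d,
    Measure.map (fun ω => X t ω i - X s ω i) P = gaussianReal 0 (Real.toNNReal (t - s))) ∧
  (∀ N : ℕ, ∀ t : Fin (N + 1) → ℝ, Monotone t → (∀ k, 0 ≤ t k) →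
    iIndepFun
      (fun p : Fin N × Fin d => fun ω =>
        X (t p.1.succ) ω p.2 - X (t p.1.castSucc) ω p.2) P)


namespace BMaux
open Real
open scoped NNReal ENNReal

lemma gaussNegMap (v : ℝ≥0) : (gaussianReal 0 v).map (fun x => -x) = gaussianReal 0 v := by
  have h : (fun x : ℝ => -x) = (fun x : ℝ => (-1 : ℝ) * x) := by funext x; ring
  rw [h]
  have := gaussianReal_map_const_mul (μ := 0) (v := v) (-1 : ℝ)
  simp only [mul_zero] at this
  rw [this]
  congr 1
  ext
  norm_num

lemma gaussNeg (v : ℝ≥0) {s : Set ℝ} (hs : MeasurableSet s) :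
    gaussianReal 0 v ((fun x : ℝ => -x) ⁻¹' s) = gaussianReal 0 v s := by
  conv_rhs => rw [← gaussNegMap v]
  rw [Measure.map_apply measurable_neg hs]

lemma gaussHalfGe (v : ℝ≥0) : 1 ≤ 2 * gaussianReal 0 v {x | 0 ≤ x} := by
  have h1 : gaussianReal 0 v {x | x ≤ 0} = gaussianReal 0 v {x | (0:ℝ) ≤ x} := by
    have : (fun x : ℝ => -x) ⁻¹' {x | (0:ℝ) ≤ x} = {x : ℝ | x ≤ 0} := by
      ext x; simp [neg_nonneg]
    rw [← this]
    exact gaussNeg v (measurableSet_le measurable_const measurable_id)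
  have h2 : (1 : ℝ≥0∞) = gaussianReal 0 v univ := (measure_univ).symm
  have h3 : (univ : Set ℝ) ⊆ {x | (0:ℝ) ≤ x} ∪ {x | x ≤ 0} := by
    intro x _; rcases le_total 0 x with h | h
    · exact Or.inl h
    · exact Or.inr h
  calc (1:ℝ≥0∞) = gaussianReal 0 v univ := h2
    _ ≤ gaussianReal 0 v ({x | (0:ℝ) ≤ x} ∪ {x | x ≤ 0}) := measure_mono h3
    _ ≤ gaussianReal 0 v {x | (0:ℝ) ≤ x} + gaussianReal 0 v {x | x ≤ 0} := measure_union_le _ _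
    _ = 2 * gaussianReal 0 v {x | (0:ℝ) ≤ x} := by rw [h1]; ring

lemma gaussHalfLe (v : ℝ≥0) : 1 ≤ 2 * gaussianReal 0 v {x | x ≤ 0} := by
  have h1 : gaussianReal 0 v {x | x ≤ 0} = gaussianReal 0 v {x | (0:ℝ) ≤ x} := by
    have : (fun x : ℝ => -x) ⁻¹' {x | (0:ℝ) ≤ x} = {x : ℝ | x ≤ 0} := by
      ext x; simp [neg_nonneg]
    rw [← this]
    exact gaussNeg v (measurableSet_le measurable_const measurable_id)
  rw [h1]; exact gaussHalfGe v

lemma gaussHalfUpper {v : ℝ≥0} (hv : v ≠ 0) : gaussianReal 0 v {x | (0:ℝ) ≤ x} ≤ 1/2 := by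
  have hsing : gaussianReal 0 v ({0} : Set ℝ) = 0 := by
    rw [gaussianReal_apply 0 hv]
    rw [setLIntegral_measure_zero _ _ (by simp [Real.volume_singleton])]
  have hIio : gaussianReal 0 v (Iio (0:ℝ)) = gaussianReal 0 v (Ioi (0:ℝ)) := by
    have : (fun x : ℝ => -x) ⁻¹' (Ioi (0:ℝ)) = Iio 0 := by ext x; simp
    rw [← this, gaussNeg v measurableSet_Ioi]
  have hpart : gaussianReal 0 v (Iio (0:ℝ)) + gaussianReal 0 v (Ici (0:ℝ)) = 1 := by
    rw [← measure_union (by simp [disjoint_left]) measurableSet_Ici]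
    simp [Iio_union_Ici]
  have hIci : gaussianReal 0 v (Ici (0:ℝ)) = gaussianReal 0 v (Ioi (0:ℝ)) := by
    have : (Ici (0:ℝ)) = Ioi 0 ∪ {0} := by ext x; simp [le_iff_lt_or_eq, or_comm]
    rw [this]
    refine le_antisymm ?_ (measure_mono subset_union_left)
    calc gaussianReal 0 v (Ioi 0 ∪ {0}) ≤ gaussianReal 0 v (Ioi 0) + gaussianReal 0 v {0} :=
      measure_union_le _ _
    _ = gaussianReal 0 v (Ioi 0) := by rw [hsing, add_zero]
  have key : 2 * gaussianReal 0 v (Ici (0:ℝ)) = 1 := by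
    rw [two_mul]
    nth_rewrite 1 [hIci]
    rw [← hIio, hpart]
  have : gaussianReal 0 v {x | (0:ℝ) ≤ x} = gaussianReal 0 v (Ici 0) := rfl
  rw [this]
  rw [ENNReal.le_div_iff_mul_le (by norm_num) (by norm_num)]
  rw [mul_comm, key]


lemma gaussTail {v : ℝ≥0} {L α : ℝ} (hvL : (v:ℝ) ≤ L) (hL : 0 < L) (hα : 0 < α) :
    gaussianReal 0 v {x | α ≤ x} ≤ ENNReal.ofReal ((1/2) * Real.exp (-(α^2)/(2*L))) := by
  have hmeas : MeasurableSet {x : ℝ | α ≤ x} := measurableSet_le measurable_const measurable_id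
  by_cases hv : v = 0
  · subst hv
    rw [gaussianReal_zero_var, Measure.dirac_apply' _ hmeas]
    have h0 : (0:ℝ) ∉ {x : ℝ | α ≤ x} := by simp [hα.not_ge]
    rw [Set.indicator_of_notMem h0]
    exact zero_le
  · have hv0 : (0:ℝ) < (v:ℝ) := lt_of_le_of_ne (v.coe_nonneg) (by exact_mod_cast (Ne.symm hv))
    have hptw : ∀ x ∈ {x : ℝ | α ≤ x}, gaussianPDF 0 v x
        ≤ ENNReal.ofReal (Real.exp (-(α^2)/(2*(v:ℝ)))) * gaussianPDF α v x := by
      intro x hx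
      simp only [mem_setOf_eq] at hx
      rw [gaussianPDF, gaussianPDF, ← ENNReal.ofReal_mul (Real.exp_nonneg _)]
      apply ENNReal.ofReal_le_ofReal
      rw [gaussianPDFReal, gaussianPDFReal]
      rw [mul_comm (Real.exp _), mul_assoc, mul_assoc, ← Real.exp_add]
      apply mul_le_mul_of_nonneg_left ?_ (by positivity)
      apply Real.exp_le_exp.mpr
      rw [← add_div]
      rw [div_le_div_iff_of_pos_right (by positivity)]
      nlinarith [mul_nonneg hα.le (sub_nonneg.mpr hx)]
    calc gaussianReal 0 v {x | α ≤ x}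
        = ∫⁻ x in {x | α ≤ x}, gaussianPDF 0 v x := gaussianReal_apply 0 hv _
      _ ≤ ∫⁻ x in {x | α ≤ x},
            ENNReal.ofReal (Real.exp (-(α^2)/(2*(v:ℝ)))) * gaussianPDF α v x :=
          setLIntegral_mono ((measurable_gaussianPDF α v).const_mul _) hptw
      _ = ENNReal.ofReal (Real.exp (-(α^2)/(2*(v:ℝ)))) * ∫⁻ x in {x | α ≤ x}, gaussianPDF α v x := by
          rw [lintegral_const_mul _ (measurable_gaussianPDF _ _)]
      _ = ENNReal.ofReal (Real.exp (-(α^2)/(2*(v:ℝ)))) * gaussianReal α v {x | α ≤ x} := by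
          rw [gaussianReal_apply α hv]
      _ ≤ ENNReal.ofReal (Real.exp (-(α^2)/(2*(v:ℝ)))) * (1/2) := by
          apply mul_le_mul_right
          have hmap : gaussianReal α v = (gaussianReal 0 v).map (· + α) := by
            rw [gaussianReal_map_add_const (μ := 0) α, zero_add]
          rw [hmap, Measure.map_apply (measurable_add_const α) hmeas]
          have : (· + α) ⁻¹' {x : ℝ | α ≤ x} = {x : ℝ | (0:ℝ) ≤ x} := by
            ext x; simp
          rw [this]
          exact gaussHalfUpper hv
      _ ≤ ENNReal.ofReal ((1/2) * Real.exp (-(α^2)/(2*L))) := by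
          have h12 : (1/2 : ℝ≥0∞) = ENNReal.ofReal (1/2) := by
            rw [ENNReal.ofReal_div_of_pos two_pos, ENNReal.ofReal_one, ENNReal.ofReal_ofNat]
          rw [h12, ← ENNReal.ofReal_mul (Real.exp_nonneg _)]
          apply ENNReal.ofReal_le_ofReal
          rw [mul_comm]
          apply mul_le_mul_of_nonneg_left _ (by norm_num)
          apply Real.exp_le_exp.mpr
          rw [neg_div, neg_div, neg_le_neg_iff]
          exact div_le_div_of_nonneg_left (sq_nonneg α) (by positivity) (by linarith)


section LevyBlock
variable {Ω : Type*} [MeasurableSpace Ω] {P : Measure Ω} [IsProbabilityMeasure P]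

lemma levy {n : ℕ} {D : Fin n → Ω → ℝ} (hD : ∀ j, Measurable (D j)) {α : ℝ} (hα : 0 < α)
    (hind : ∀ k : ℕ, k ≤ n →
      IndepFun (fun ω (j : ↥(Finset.univ.filter fun j : Fin n => (j : ℕ) < k)) => D j.1 ω)
               (fun ω (j : ↥(Finset.univ.filter fun j : Fin n => ¬ (j : ℕ) < k)) => D j.1 ω) P)
    (hhalf : ∀ k : ℕ, k ≤ n →
      1 ≤ 2 * P {ω | 0 ≤ ∑ j ∈ Finset.univ.filter (fun j : Fin n => ¬ (j : ℕ) < k), D j ω}) :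
    P {ω | ∃ k : ℕ, k ≤ n ∧ α ≤ ∑ j ∈ Finset.univ.filter (fun j : Fin n => (j : ℕ) < k), D j ω}
      ≤ 2 * P {ω | α ≤ ∑ j, D j ω} := by
  classical
  set S : ℕ → Ω → ℝ :=
    fun k ω => ∑ j ∈ Finset.univ.filter (fun j : Fin n => (j : ℕ) < k), D j ω with hS
  have hSmeas : ∀ k, Measurable (S k) := fun k =>
    Finset.measurable_sum _ (fun j _ => hD j)
  set A : ℕ → Set Ω := fun k => {ω | α ≤ S k ω ∧ ∀ m, m < k → S m ω < α} with hA
  set Fk : ℕ → Finset (Fin n) := fun k => Finset.univ.filter (fun j : Fin n => (j : ℕ) < k) with hFk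
  set Tk : ℕ → Finset (Fin n) := fun k => Finset.univ.filter (fun j : Fin n => ¬ (j : ℕ) < k) with hTk
  set φ : ∀ _ : ℕ, Ω → (↥(Fk _) → ℝ) := fun k ω j => D j.1 ω with hφ
  set ψ : ∀ _ : ℕ, Ω → (↥(Tk _) → ℝ) := fun k ω j => D j.1 ω with hψ
  have hφmeas : ∀ k, Measurable (φ k) := fun k =>
    measurable_pi_lambda _ (fun j => hD j.1)
  have hψmeas : ∀ k, Measurable (ψ k) := fun k =>
    measurable_pi_lambda _ (fun j => hD j.1)
  set g : ∀ k m : ℕ, (↥(Fk k) → ℝ) → ℝ :=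
    fun k m y => ∑ j ∈ (Fk k).attach, (if (j.1 : ℕ) < m then y j else 0) with hg
  have hgmeas : ∀ k m, Measurable (g k m) := by
    intro k m
    apply Finset.measurable_sum
    intro j _
    by_cases h : (j.1 : ℕ) < m
    · simpa [h] using measurable_pi_apply j
    · simpa [h] using (measurable_const : Measurable fun _ : (↥(Fk k) → ℝ) => (0:ℝ))
  have hgS : ∀ k m : ℕ, m ≤ k → ∀ ω, g k m (φ k ω) = S m ω := by
    intro k m hmk ω
    rw [hg, hS]
    simp only
    rw [Finset.sum_attach (Fk k) (fun j => if (j : ℕ) < m then D j ω else 0),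
      ← Finset.sum_filter]
    congr 1
    rw [hFk]
    ext j
    simp only [Finset.mem_filter, Finset.mem_univ, true_and]
    omega
  -- the h-function on T-side
  set h : ∀ k : ℕ, (↥(Tk k) → ℝ) → ℝ := fun k y => ∑ j ∈ (Tk k).attach, y j with hh
  have hhmeas : ∀ k, Measurable (h k) := fun k =>
    Finset.measurable_sum _ (fun j _ => measurable_pi_apply j)
  have hhT : ∀ k ω, h k (ψ k ω) = ∑ j ∈ Tk k, D j ω := by
    intro k ω
    rw [hh]
    simp only
    rw [Finset.sum_attach (Tk k) (fun j => D j ω)]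
  -- sets
  set M : ∀ k : ℕ, Set (↥(Fk k) → ℝ) :=
    fun k => {y | α ≤ g k k y} ∩ ⋂ m, ⋂ (_ : m < k), {y | g k m y < α} with hM
  have hMmeas : ∀ k, MeasurableSet (M k) := by
    intro k
    exact (measurableSet_le measurable_const (hgmeas k k)).inter
      (MeasurableSet.iInter fun m => MeasurableSet.iInter fun _ =>
        measurableSet_lt (hgmeas k m) measurable_const)
  have hAeq : ∀ k, A k = φ k ⁻¹' (M k) := by
    intro k
    ext ω
    simp only [hA, hM, mem_setOf_eq, mem_preimage, mem_inter_iff, mem_iInter]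
    constructor
    · rintro ⟨h1, h2⟩
      exact ⟨by rw [hgS k k le_rfl]; exact h1, fun m hm => by rw [hgS k m hm.le]; exact h2 m hm⟩
    · rintro ⟨h1, h2⟩
      rw [hgS k k le_rfl] at h1
      exact ⟨h1, fun m hm => by have := h2 m hm; rwa [hgS k m hm.le] at this⟩
  have hAmeas : ∀ k, MeasurableSet (A k) := fun k => (hAeq k) ▸ (hφmeas k) (hMmeas k)
  set B : ℕ → Set Ω := fun k => {ω | 0 ≤ ∑ j ∈ Tk k, D j ω} with hB
  have hBeq : ∀ k, B k = ψ k ⁻¹' {y | 0 ≤ h k y} := by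
    intro k; ext ω
    simp only [hB, mem_setOf_eq, mem_preimage, hhT]
  have hBmeas : ∀ k, MeasurableSet (B k) :=
    fun k => (hBeq k) ▸ (hψmeas k) (measurableSet_le measurable_const (hhmeas k))
  -- independence
  have hABmul : ∀ k : ℕ, k ≤ n → P (A k ∩ B k) = P (A k) * P (B k) := by
    intro k hk
    rw [hAeq k, hBeq k]
    exact (hind k hk).measure_inter_preimage_eq_mul _ _ (hMmeas k)
      (measurableSet_le measurable_const (hhmeas k))
  -- union decomposition
  have hUnion : {ω | ∃ k : ℕ, k ≤ n ∧ α ≤ S k ω} = ⋃ k ∈ Finset.range (n+1), A k := by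
    ext ω
    simp only [mem_setOf_eq, mem_iUnion, Finset.mem_range]
    constructor
    · rintro ⟨k, hk, hSk⟩
      have hex : ∃ m, α ≤ S m ω := ⟨k, hSk⟩
      refine ⟨Nat.find hex, ?_, Nat.find_spec hex, fun m hm => not_le.mp (Nat.find_min hex hm)⟩
      exact lt_of_le_of_lt (Nat.find_min' hex hSk) (Nat.lt_succ_of_le hk)
    · rintro ⟨k, hk, h1, _⟩
      exact ⟨k, Nat.lt_succ_iff.mp hk, h1⟩
  have hdisj : (Finset.range (n+1) : Set ℕ).PairwiseDisjoint A := by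
    have key : ∀ k l : ℕ, k < l → Disjoint (A k) (A l) := by
      intro k l hlt
      refine Set.disjoint_left.mpr ?_
      rintro ω ⟨h1, _⟩ ⟨_, h2⟩
      exact absurd h1 (not_le.mpr (h2 k hlt))
    intro k _ l _ hkl
    rcases lt_or_gt_of_ne hkl with hlt | hlt
    · exact key k l hlt
    · exact (key l k hlt).symm
  have hsub : ∀ k, k ≤ n → A k ∩ B k ⊆ {ω | α ≤ ∑ j, D j ω} := by
    intro k hk ω ⟨⟨h1, _⟩, h2⟩
    have h2' : 0 ≤ ∑ j ∈ Tk k, D j ω := h2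
    simp only [mem_setOf_eq]
    have hsplit : ∑ j, D j ω = S k ω + ∑ j ∈ Tk k, D j ω := by
      rw [hS]; simp only [hFk, hTk]
      exact (Finset.sum_filter_add_sum_filter_not Finset.univ _ _).symm
    rw [hsplit]
    linarith
  calc P {ω | ∃ k : ℕ, k ≤ n ∧ α ≤ S k ω}
      = ∑ k ∈ Finset.range (n+1), P (A k) := by
        rw [hUnion, measure_biUnion_finset hdisj (fun k _ => hAmeas k)]
    _ ≤ ∑ k ∈ Finset.range (n+1), 2 * P (A k ∩ B k) := by
        apply Finset.sum_le_sum
        intro k hk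
        have hk' : k ≤ n := Nat.lt_succ_iff.mp (Finset.mem_range.mp hk)
        calc P (A k) = P (A k) * 1 := (mul_one _).symm
          _ ≤ P (A k) * (2 * P (B k)) := mul_le_mul_right (hhalf k hk') _
          _ = 2 * (P (A k) * P (B k)) := by ring
          _ = 2 * P (A k ∩ B k) := by rw [hABmul k hk']
    _ = 2 * ∑ k ∈ Finset.range (n+1), P (A k ∩ B k) := by rw [Finset.mul_sum]
    _ = 2 * P (⋃ k ∈ Finset.range (n+1), A k ∩ B k) := by
        rw [measure_biUnion_finset (hdisj.mono_on fun k _ => inter_subset_left)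
          (fun k _ => (hAmeas k).inter (hBmeas k))]
    _ ≤ 2 * P {ω | α ≤ ∑ j, D j ω} := by
        apply mul_le_mul_right
        apply measure_mono
        apply iUnion₂_subset
        intro k hk
        exact hsub k (Nat.lt_succ_iff.mp (Finset.mem_range.mp hk))


lemma block {d : ℕ} {X : ℝ → Ω → EuclideanSpace ℝ (Fin d)} (hX : IsStdBrownianMotion d P X)
    (i : Fin d) {a L α : ℝ} (ha : 0 ≤ a) (hL : 0 < L) (hα : 0 < α)
    (m : ℕ) (u : ℕ → ℝ) (hu : ∀ j, j < m → a ≤ u j ∧ u j ≤ a + L) :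
    P {ω | ∃ j, j < m ∧ α ≤ |X (u j) ω i - X a ω i|}
      ≤ ENNReal.ofReal (2 * Real.exp (-(α^2) / (2*L))) := by
  classical
  obtain ⟨-, -, hmeas, hlaw, hinc⟩ := hX
  have measXc : ∀ (r : ℝ) (ii : Fin d), Measurable (fun ω => X r ω ii) :=
    fun r ii => (measurable_pi_apply ii).comp ((WithLp.measurable_ofLp _ _).comp (hmeas r))
  set l : List ℝ := Finset.sort (insert a ((Finset.range m).image u)) (· ≤ ·) with hl
  have hsort : l.Pairwise (· ≤ ·) := Finset.pairwise_sort _ _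
  have hlpos : 0 < l.length := by
    rw [hl, Finset.length_sort]
    exact Finset.card_pos.mpr ⟨a, Finset.mem_insert_self _ _⟩
  set N : ℕ := l.length - 1 with hNdef
  have hN1 : N + 1 = l.length := Nat.succ_pred_eq_of_pos hlpos
  set t : Fin (N+1) → ℝ := fun j => l.get ⟨j.1, by omega⟩ with ht
  have htmono : Monotone t := by
    intro j1 j2 h12
    exact hsort.rel_get_of_le (by exact h12)
  have htmem : ∀ j, t j ∈ insert a ((Finset.range m).image u) := by
    intro j
    rw [← Finset.mem_sort (· ≤ ·), ← hl]
    exact l.get_mem _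
  have hta : ∀ j, a ≤ t j := by
    intro j
    rcases Finset.mem_insert.mp (htmem j) with h | h
    · exact h.ge
    · obtain ⟨jj, hjj, hV⟩ := Finset.mem_image.mp h
      rw [← hV]; exact (hu jj (Finset.mem_range.mp hjj)).1
  have htL : ∀ j, t j ≤ a + L := by
    intro j
    rcases Finset.mem_insert.mp (htmem j) with h | h
    · rw [h]; linarith
    · obtain ⟨jj, hjj, hV⟩ := Finset.mem_image.mp h
      rw [← hV]; exact (hu jj (Finset.mem_range.mp hjj)).2
  have ht0 : t 0 = a := by
    refine le_antisymm ?_ (hta 0)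
    have hmem : a ∈ l := by
      rw [hl, Finset.mem_sort (· ≤ ·)]; exact Finset.mem_insert_self _ _
    obtain ⟨n0, hn0⟩ := List.mem_iff_get.mp hmem
    rw [← hn0]
    exact hsort.rel_get_of_le (by rw [Fin.le_def]; exact Nat.zero_le _)
  have htsurj : ∀ j, j < m → ∃ k : Fin (N+1), t k = u j := by
    intro j hj
    have hmem : u j ∈ l := by
      rw [hl, Finset.mem_sort (· ≤ ·)]
      exact Finset.mem_insert_of_mem (Finset.mem_image_of_mem u (Finset.mem_range.mpr hj))
    obtain ⟨idx, hidx⟩ := List.mem_iff_get.mp hmem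
    refine ⟨⟨idx.1, by omega⟩, ?_⟩
    rw [ht, ← hidx]
  set D : Fin N → Ω → ℝ := fun j ω => X (t j.succ) ω i - X (t j.castSucc) ω i with hD
  have hDmeas : ∀ j, Measurable (D j) := fun j => (measXc _ i).sub (measXc _ i)
  have tel : ∀ ω (k : ℕ) (hk : k ≤ N),
      (∑ j ∈ Finset.univ.filter (fun j : Fin N => (j:ℕ) < k), D j ω)
        = X (t ⟨k, Nat.lt_succ_of_le hk⟩) ω i - X a ω i := by
    intro ω k
    induction k with
    | zero =>
      intro hk
      have he : Finset.univ.filter (fun j : Fin N => (j:ℕ) < 0) = ∅ := by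
        ext j; simp
      rw [he, Finset.sum_empty]
      have h0 : t ⟨0, Nat.lt_succ_of_le hk⟩ = a := by rw [← ht0]; congr 1
      rw [h0, sub_self]
    | succ k ih =>
      intro hk
      have hkN : k < N := hk
      have hins : Finset.univ.filter (fun j : Fin N => (j:ℕ) < k+1)
          = insert ⟨k, hkN⟩ (Finset.univ.filter (fun j : Fin N => (j:ℕ) < k)) := by
        ext j
        simp only [Finset.mem_filter, Finset.mem_univ, true_and, Finset.mem_insert, Fin.ext_iff]
        omega
      rw [hins, Finset.sum_insert (by simp), ih (le_of_lt hkN)]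
      have h1 : D ⟨k, hkN⟩ ω
          = X (t ⟨k+1, Nat.lt_succ_of_le hk⟩) ω i - X (t ⟨k, Nat.lt_succ_of_le (le_of_lt hkN)⟩) ω i := rfl
      rw [h1]; ring
  have huniv : Finset.univ.filter (fun j : Fin N => (j:ℕ) < N) = Finset.univ := by
    ext j; simp [j.isLt]
  have hlastval : ∀ ω, (∑ j, D j ω) = X (t (Fin.last N)) ω i - X a ω i := by
    intro ω
    rw [← huniv, tel ω N le_rfl]
    rfl
  -- independence for D and its negation
  have hJ := hinc N t htmono (fun j => le_trans ha (hta j))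
  have hmeasp : ∀ p : Fin N × Fin d,
      Measurable (fun ω => X (t p.1.succ) ω p.2 - X (t p.1.castSucc) ω p.2) :=
    fun p => (measXc _ _).sub (measXc _ _)
  have hindPre : ∀ k : ℕ,
      IndepFun (fun ω (p : ↥(Finset.univ.filter
          fun p : Fin N × Fin d => (p.1 : ℕ) < k ∧ p.2 = i)) =>
            X (t p.1.1.succ) ω p.1.2 - X (t p.1.1.castSucc) ω p.1.2)
        (fun ω (p : ↥(Finset.univ.filter
          fun p : Fin N × Fin d => ¬ (p.1 : ℕ) < k ∧ p.2 = i)) =>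
            X (t p.1.1.succ) ω p.1.2 - X (t p.1.1.castSucc) ω p.1.2) P := by
    intro k
    have hdisj : Disjoint
        (Finset.univ.filter fun p : Fin N × Fin d => (p.1 : ℕ) < k ∧ p.2 = i)
        (Finset.univ.filter fun p : Fin N × Fin d => ¬ (p.1 : ℕ) < k ∧ p.2 = i) := by
      rw [Finset.disjoint_left]
      intro p hp1 hp2
      simp only [Finset.mem_filter, Finset.mem_univ, true_and] at hp1 hp2
      exact hp2.1 hp1.1
    exact hJ.indepFun_finset _ _ hdisj hmeasp
  have hindD : ∀ k : ℕ, k ≤ N →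
      IndepFun (fun ω (j : ↥(Finset.univ.filter fun j : Fin N => (j : ℕ) < k)) => D j.1 ω)
               (fun ω (j : ↥(Finset.univ.filter fun j : Fin N => ¬ (j : ℕ) < k)) => D j.1 ω) P := by
    intro k _
    have hρS : Measurable (fun (y : ↥(Finset.univ.filter
        fun p : Fin N × Fin d => (p.1 : ℕ) < k ∧ p.2 = i) → ℝ)
          (j : ↥(Finset.univ.filter fun j : Fin N => (j : ℕ) < k)) =>
            y ⟨(j.1, i), by
              simpa using (Finset.mem_filter.mp j.2).2⟩) :=
      measurable_pi_lambda _ (fun j => measurable_pi_apply _)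
    have hρT : Measurable (fun (y : ↥(Finset.univ.filter
        fun p : Fin N × Fin d => ¬ (p.1 : ℕ) < k ∧ p.2 = i) → ℝ)
          (j : ↥(Finset.univ.filter fun j : Fin N => ¬ (j : ℕ) < k)) =>
            y ⟨(j.1, i), by
              simpa using (Finset.mem_filter.mp j.2).2⟩) :=
      measurable_pi_lambda _ (fun j => measurable_pi_apply _)
    exact (hindPre k).comp hρS hρT
  have hindD' : ∀ k : ℕ, k ≤ N →
      IndepFun (fun ω (j : ↥(Finset.univ.filter fun j : Fin N => (j : ℕ) < k)) => -(D j.1 ω))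
               (fun ω (j : ↥(Finset.univ.filter fun j : Fin N => ¬ (j : ℕ) < k)) => -(D j.1 ω)) P := by
    intro k _
    have hρS : Measurable (fun (y : ↥(Finset.univ.filter
        fun p : Fin N × Fin d => (p.1 : ℕ) < k ∧ p.2 = i) → ℝ)
          (j : ↥(Finset.univ.filter fun j : Fin N => (j : ℕ) < k)) =>
            -(y ⟨(j.1, i), by
              simpa using (Finset.mem_filter.mp j.2).2⟩)) :=
      measurable_pi_lambda _ (fun j => (measurable_pi_apply _).neg)
    have hρT : Measurable (fun (y : ↥(Finset.univ.filter
        fun p : Fin N × Fin d => ¬ (p.1 : ℕ) < k ∧ p.2 = i) → ℝ)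
          (j : ↥(Finset.univ.filter fun j : Fin N => ¬ (j : ℕ) < k)) =>
            -(y ⟨(j.1, i), by
              simpa using (Finset.mem_filter.mp j.2).2⟩)) :=
      measurable_pi_lambda _ (fun j => (measurable_pi_apply _).neg)
    exact (hindPre k).comp hρS hρT
  -- half-probability hypotheses
  have hhalfD : ∀ k : ℕ, k ≤ N →
      1 ≤ 2 * P {ω | 0 ≤ ∑ j ∈ Finset.univ.filter (fun j : Fin N => ¬ (j : ℕ) < k), D j ω} := by
    intro k hk
    have hdiff : ∀ ω, (∑ j ∈ Finset.univ.filter (fun j : Fin N => ¬ (j:ℕ) < k), D j ω)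
        = X (t (Fin.last N)) ω i - X (t ⟨k, Nat.lt_succ_of_le hk⟩) ω i := by
      intro ω
      have hsp := Finset.sum_filter_add_sum_filter_not Finset.univ
        (fun j : Fin N => (j:ℕ) < k) (fun j => D j ω)
      have h2 := tel ω k hk
      have h3 := hlastval ω
      linarith
    have hset : {ω | 0 ≤ ∑ j ∈ Finset.univ.filter (fun j : Fin N => ¬ (j:ℕ) < k), D j ω}
        = (fun ω => X (t (Fin.last N)) ω i - X (t ⟨k, Nat.lt_succ_of_le hk⟩) ω i) ⁻¹' {x | 0 ≤ x} := by
      ext ω; simp only [mem_setOf_eq, mem_preimage, hdiff ω]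
    rw [hset, ← Measure.map_apply (show Measurable (fun ω => X (t (Fin.last N)) ω i - X (t ⟨k, Nat.lt_succ_of_le hk⟩) ω i) from (measXc _ i).sub (measXc _ i))
      (show MeasurableSet {x : ℝ | 0 ≤ x} from measurableSet_Ici),
      hlaw (t ⟨k, Nat.lt_succ_of_le hk⟩) (t (Fin.last N))
        (le_trans ha (hta _)) (htmono (Fin.le_last _)) i]
    exact gaussHalfGe _
  have hhalfD' : ∀ k : ℕ, k ≤ N →
      1 ≤ 2 * P {ω | 0 ≤ ∑ j ∈ Finset.univ.filter (fun j : Fin N => ¬ (j : ℕ) < k), -(D j ω)} := by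
    intro k hk
    have hdiff : ∀ ω, (∑ j ∈ Finset.univ.filter (fun j : Fin N => ¬ (j:ℕ) < k), D j ω)
        = X (t (Fin.last N)) ω i - X (t ⟨k, Nat.lt_succ_of_le hk⟩) ω i := by
      intro ω
      have hsp := Finset.sum_filter_add_sum_filter_not Finset.univ
        (fun j : Fin N => (j:ℕ) < k) (fun j => D j ω)
      have h2 := tel ω k hk
      have h3 := hlastval ω
      linarith
    have hset : {ω | 0 ≤ ∑ j ∈ Finset.univ.filter (fun j : Fin N => ¬ (j:ℕ) < k), -(D j ω)}
        = (fun ω => X (t (Fin.last N)) ω i - X (t ⟨k, Nat.lt_succ_of_le hk⟩) ω i) ⁻¹' {x | x ≤ 0} := by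
      ext ω
      simp only [mem_setOf_eq, mem_preimage, Finset.sum_neg_distrib, hdiff ω]
      constructor <;> intro h <;> linarith
    rw [hset, ← Measure.map_apply (show Measurable (fun ω => X (t (Fin.last N)) ω i - X (t ⟨k, Nat.lt_succ_of_le hk⟩) ω i) from (measXc _ i).sub (measXc _ i))
      (show MeasurableSet {x : ℝ | x ≤ 0} from measurableSet_Iic),
      hlaw (t ⟨k, Nat.lt_succ_of_le hk⟩) (t (Fin.last N))
        (le_trans ha (hta _)) (htmono (Fin.le_last _)) i]
    exact gaussHalfLe _
  -- tail bounds
  have hvL : (((t (Fin.last N) - a).toNNReal : ℝ≥0) : ℝ) ≤ L := by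
    rw [Real.coe_toNNReal']
    exact max_le (by linarith [htL (Fin.last N)]) hL.le
  have hfmeas : Measurable (fun ω => X (t (Fin.last N)) ω i - X a ω i) :=
    (measXc _ i).sub (measXc _ i)
  have hflaw := hlaw a (t (Fin.last N)) ha (by rw [← ht0]; exact htmono (Fin.zero_le _)) i
  have hT1 : P {ω | α ≤ ∑ j, D j ω} ≤ ENNReal.ofReal ((1/2) * Real.exp (-(α^2)/(2*L))) := by
    have hset : {ω | α ≤ ∑ j, D j ω}
        = (fun ω => X (t (Fin.last N)) ω i - X a ω i) ⁻¹' {x | α ≤ x} := by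
      ext ω; simp only [mem_setOf_eq, mem_preimage, hlastval ω]
    rw [hset, ← Measure.map_apply hfmeas (show MeasurableSet {x : ℝ | α ≤ x} from measurableSet_Ici),
      hflaw]
    exact gaussTail hvL hL hα
  have hT2 : P {ω | α ≤ ∑ j, -(D j ω)} ≤ ENNReal.ofReal ((1/2) * Real.exp (-(α^2)/(2*L))) := by
    have hset : {ω | α ≤ ∑ j, -(D j ω)}
        = (fun ω => X (t (Fin.last N)) ω i - X a ω i) ⁻¹' {x | α ≤ -x} := by
      ext ω
      simp only [mem_setOf_eq, mem_preimage, Finset.sum_neg_distrib, hlastval ω]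
    rw [hset, ← Measure.map_apply hfmeas
      (show MeasurableSet {x : ℝ | α ≤ -x} from measurableSet_le measurable_const measurable_neg),
      hflaw]
    have hpre : {x : ℝ | α ≤ -x} = (fun x : ℝ => -x) ⁻¹' {x | α ≤ x} := rfl
    rw [hpre, gaussNeg _ (show MeasurableSet {x : ℝ | α ≤ x} from measurableSet_Ici)]
    exact gaussTail hvL hL hα
  -- inclusion into the two one-sided maximal events
  have hincl : {ω | ∃ j, j < m ∧ α ≤ |X (u j) ω i - X a ω i|} ⊆
      {ω | ∃ k : ℕ, k ≤ N ∧ α ≤ ∑ j ∈ Finset.univ.filter (fun j : Fin N => (j:ℕ) < k), D j ω}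
    ∪ {ω | ∃ k : ℕ, k ≤ N ∧ α ≤ ∑ j ∈ Finset.univ.filter (fun j : Fin N => (j:ℕ) < k), -(D j ω)} := by
    rintro ω ⟨j, hj, habs⟩
    obtain ⟨kf, hkf⟩ := htsurj j hj
    have hkN : (kf : ℕ) ≤ N := Nat.lt_succ_iff.mp kf.isLt
    have heta : (⟨(kf : ℕ), Nat.lt_succ_of_le hkN⟩ : Fin (N+1)) = kf := Fin.ext rfl
    have hval : (∑ jj ∈ Finset.univ.filter (fun jj : Fin N => (jj:ℕ) < (kf:ℕ)), D jj ω)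
        = X (u j) ω i - X a ω i := by
      rw [tel ω (kf : ℕ) hkN, heta, hkf]
    rcases le_abs.mp habs with hc | hc
    · left; exact ⟨(kf : ℕ), hkN, by rw [hval]; exact hc⟩
    · right
      refine ⟨(kf : ℕ), hkN, ?_⟩
      rw [Finset.sum_neg_distrib, hval]
      linarith
  -- put everything together
  calc P {ω | ∃ j, j < m ∧ α ≤ |X (u j) ω i - X a ω i|}
      ≤ P ({ω | ∃ k : ℕ, k ≤ N ∧ α ≤ ∑ j ∈ Finset.univ.filter (fun j : Fin N => (j:ℕ) < k), D j ω}
        ∪ {ω | ∃ k : ℕ, k ≤ N ∧ α ≤ ∑ j ∈ Finset.univ.filter (fun j : Fin N => (j:ℕ) < k), -(D j ω)}) :=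
        measure_mono hincl
    _ ≤ P {ω | ∃ k : ℕ, k ≤ N ∧ α ≤ ∑ j ∈ Finset.univ.filter (fun j : Fin N => (j:ℕ) < k), D j ω}
        + P {ω | ∃ k : ℕ, k ≤ N ∧ α ≤ ∑ j ∈ Finset.univ.filter (fun j : Fin N => (j:ℕ) < k), -(D j ω)} :=
        measure_union_le _ _
    _ ≤ 2 * P {ω | α ≤ ∑ j, D j ω} + 2 * P {ω | α ≤ ∑ j, -(D j ω)} :=
        add_le_add (levy hDmeas hα hindD hhalfD)
          (levy (fun j => (hDmeas j).neg) hα hindD' hhalfD')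
    _ ≤ 2 * ENNReal.ofReal ((1/2) * Real.exp (-(α^2)/(2*L)))
        + 2 * ENNReal.ofReal ((1/2) * Real.exp (-(α^2)/(2*L))) :=
        add_le_add (mul_le_mul_right hT1 2) (mul_le_mul_right hT2 2)
    _ = 4 * ENNReal.ofReal ((1/2) * Real.exp (-(α^2)/(2*L))) := by ring
    _ = ENNReal.ofReal (2 * Real.exp (-(α^2) / (2*L))) := by
        rw [show (4:ℝ≥0∞) = ENNReal.ofReal (4:ℝ) by norm_num,
          ← ENNReal.ofReal_mul (by norm_num)]
        congr 1
        ring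


end LevyBlock

end BMaux

open scoped NNReal ENNReal in
open BMaux in
set_option maxHeartbeats 1000000 in
theorem stmt_18 {Ω : Type*} [MeasurableSpace Ω] (P : Measure Ω) [IsProbabilityMeasure P]
    (d : ℕ) (hd : 0 < d) (X : ℝ → Ω → EuclideanSpace ℝ (Fin d))
    (hX : IsStdBrownianMotion d P X) (ε δ : ℝ) (hε : 0 < ε) (hδ0 : 0 < δ) (hδ1 : δ ≤ 1) :
    P {ω | ∃ s ∈ Icc (0 : ℝ) 1, ∃ t ∈ Icc (0 : ℝ) 1,
        |t - s| < δ ∧ ε < dist (X s ω) (X t ω)} ≤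
      ENNReal.ofReal (4 * Real.sqrt 5 * ((d : ℝ) / δ) *
        Real.exp (-(ε ^ 2 / (10 * (d : ℝ) * δ)))) := by
  classical
  have hsd : 0 < Real.sqrt d := Real.sqrt_pos.mpr (by exact_mod_cast hd)
  set α : ℝ := ε / (2 * Real.sqrt d) with hαdef
  have hα : 0 < α := by positivity
  set L : ℝ := 5 * δ / 4 with hLdef
  have hL : 0 < L := by positivity
  set c : ℝ := max (1 - L) 0 with hcdef
  have hc0 : 0 ≤ c := le_max_right _ _
  set K : ℕ := Nat.floor (4 * c / δ) with hKdef
  set n : ℕ := K + 2 with hndef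
  set aa : ℕ → ℝ := fun k => min ((k : ℝ) * (δ/4)) c with haadef
  have haanonneg : ∀ k, 0 ≤ aa k := fun k => le_min (by positivity) hc0
  set q : ℕ → ℝ := fun j => (((Denumerable.eqv ℚ).symm j : ℚ) : ℝ) with hqdef
  set uu : ℕ → ℕ → ℝ := fun k j => if aa k ≤ q j ∧ q j ≤ aa k + L then q j else aa k with huudef
  have huu_mem : ∀ k j, aa k ≤ uu k j ∧ uu k j ≤ aa k + L := by
    intro k j
    rw [huudef]
    simp only
    split_ifs with h
    · exact h
    · exact ⟨le_rfl, by linarith⟩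
  set EV : ℕ → Fin d → ℕ → Set Ω := fun k i m =>
    {ω | ∃ j, j < m ∧ α ≤ |X (uu k j) ω i - X (aa k) ω i|} with hEVdef
  have hblock : ∀ k (i : Fin d) m, P (EV k i m) ≤ ENNReal.ofReal (2 * Real.exp (-(α^2)/(2*L))) :=
    fun k i m => block hX i (haanonneg k) hL hα m (uu k) (fun j _ => huu_mem k j)
  have hEVmono : ∀ k i, Monotone (EV k i) := by
    intro k i m1 m2 hm
    rintro ω ⟨j, hj, hh⟩
    exact ⟨j, lt_of_lt_of_le hj hm, hh⟩
  set EVU : ℕ → Fin d → Set Ω := fun k i => ⋃ m, EV k i m with hEVUdef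
  have hEVUbound : ∀ k i, P (EVU k i) ≤ ENNReal.ofReal (2 * Real.exp (-(α^2)/(2*L))) := by
    intro k i
    exact le_of_tendsto' (tendsto_measure_iUnion_atTop (μ := P) (hEVmono k i))
      (fun m => hblock k i m)
  set Bad : Set Ω := {ω | ¬ Continuous fun r => X r ω} with hBaddef
  have hBad0 : P Bad = 0 := by
    have := hX.2.1
    rwa [ae_iff] at this
  -- key pointwise inclusion
  have key : ∀ ω, Continuous (fun r => X r ω) → ∀ s t : ℝ, s ∈ Icc (0:ℝ) 1 → t ∈ Icc (0:ℝ) 1 →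
      s ≤ t → t - s < δ → ε < dist (X s ω) (X t ω) →
      ω ∈ ⋃ k ∈ Finset.range n, ⋃ i : Fin d, EVU k i := by
    intro ω hcont s t hs ht hstle hlt hdist
    obtain ⟨k, hkn, hks, hkt⟩ : ∃ k, k < n ∧ aa k ≤ s ∧ t ≤ aa k + L := by
      by_cases hsc : s < c
      · have h3 := Nat.floor_le (show (0:ℝ) ≤ 4*s/δ from div_nonneg (by linarith [hs.1]) hδ0.le)
        have h2 : (Nat.floor (4*s/δ) : ℝ) * (δ/4) ≤ s := by
          have h4 : (Nat.floor (4*s/δ) : ℝ) * (δ/4) ≤ (4*s/δ) * (δ/4) := by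
            apply mul_le_mul_of_nonneg_right h3; positivity
          have h5 : (4*s/δ) * (δ/4) = s := by field_simp
          linarith
        refine ⟨Nat.floor (4 * s / δ), ?_, le_trans (min_le_left _ _) h2, ?_⟩
        · have h1 : Nat.floor (4*s/δ) ≤ K :=
            Nat.floor_le_floor ((div_le_div_iff_of_pos_right hδ0).mpr (by linarith))
          omega
        · have haak : aa (Nat.floor (4*s/δ)) = (Nat.floor (4*s/δ) : ℝ) * (δ/4) :=
            min_eq_left (by linarith)
          have h6 : s < ((Nat.floor (4*s/δ) : ℝ) + 1) * (δ/4) := by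
            have h7 := Nat.lt_floor_add_one (4*s/δ)
            have h8 : (4*s/δ) * (δ/4) < ((Nat.floor (4*s/δ) : ℝ) + 1) * (δ/4) := by
              apply mul_lt_mul_of_pos_right h7; positivity
            have h5 : (4*s/δ) * (δ/4) = s := by field_simp
            linarith
          rw [haak, hLdef]
          nlinarith
      · push_neg at hsc
        have h1 : c < ((K:ℝ) + 1) * (δ/4) := by
          have h2 := Nat.lt_floor_add_one (4*c/δ)
          have h3 : (4*c/δ) * (δ/4) < ((K:ℝ) + 1) * (δ/4) := by
            apply mul_lt_mul_of_pos_right ?_ (by positivity)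
            exact_mod_cast h2
          have h4 : (4*c/δ) * (δ/4) = c := by field_simp
          linarith
        have haak : aa (K+1) = c := by
          apply min_eq_right
          push_cast
          linarith
        have hcl : 1 - L ≤ c := le_max_left _ _
        exact ⟨K+1, by omega, by rw [haak]; exact hsc, by rw [haak]; linarith [ht.2]⟩
    have htri : ε/2 < dist (X s ω) (X (aa k) ω) ∨ ε/2 < dist (X (aa k) ω) (X t ω) := by
      by_contra hcon
      push_neg at hcon
      have h1 := dist_triangle (X s ω) (X (aa k) ω) (X t ω)
      linarith [hcon.1, hcon.2]
    obtain ⟨u, hu1, hu2, hudist⟩ :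
        ∃ u, aa k ≤ u ∧ u ≤ aa k + L ∧ ε/2 < dist (X u ω) (X (aa k) ω) := by
      rcases htri with h | h
      · exact ⟨s, hks, le_trans hstle hkt, h⟩
      · exact ⟨t, le_trans hks hstle, hkt, by rwa [dist_comm] at h⟩
    have hcoord : ∃ i : Fin d, α < |X u ω i - X (aa k) ω i| := by
      by_contra hcon
      push_neg at hcon
      have hbound : dist (X u ω) (X (aa k) ω) ≤ ε/2 := by
        rw [EuclideanSpace.dist_eq]
        have hsum : (∑ i, dist (X u ω i) (X (aa k) ω i)^2) ≤ (d:ℝ) * α^2 := by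
          calc (∑ i, dist (X u ω i) (X (aa k) ω i)^2) ≤ ∑ _i : Fin d, α^2 := by
                apply Finset.sum_le_sum
                intro i _
                have hcc := hcon i
                rw [Real.dist_eq]
                nlinarith [abs_nonneg (X u ω i - X (aa k) ω i), hα.le]
            _ = (d:ℝ) * α^2 := by
                rw [Finset.sum_const, Finset.card_univ, Fintype.card_fin, nsmul_eq_mul]
        calc Real.sqrt (∑ i, dist (X u ω i) (X (aa k) ω i)^2)
            ≤ Real.sqrt ((d:ℝ) * α^2) := Real.sqrt_le_sqrt hsum
          _ = ε/2 := by
              rw [hαdef]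
              rw [show (d:ℝ) * (ε/(2*Real.sqrt d))^2 = (ε/2)^2 by
                rw [div_pow, mul_pow, Real.sq_sqrt (Nat.cast_nonneg d)]
                have hdne : ((d:ℝ)) ≠ 0 := by positivity
                field_simp]
              exact Real.sqrt_sq (by positivity)
      linarith
    obtain ⟨i, hi⟩ := hcoord
    have huA : aa k < u := by
      rcases eq_or_lt_of_le hu1 with he | h
      · exfalso; rw [← he] at hi; simp at hi; linarith
      · exact h
    set β : ℝ := |X u ω i - X (aa k) ω i| - α with hβdef
    have hβ : 0 < β := by rw [hβdef]; linarith
    obtain ⟨η, hη0, hηprop⟩ := Metric.continuous_iff.mp hcont u β hβ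
    have hlo : max (aa k) (u - η) < u := max_lt huA (by linarith)
    obtain ⟨r, hr1, hr2⟩ := exists_rat_btwn hlo
    obtain ⟨j, hjq⟩ : ∃ j, q j = (r:ℝ) := ⟨Denumerable.eqv ℚ r, by
      rw [hqdef]; simp⟩
    have hrA : aa k ≤ q j := by rw [hjq]; exact le_of_lt (lt_of_le_of_lt (le_max_left _ _) hr1)
    have hrL : q j ≤ aa k + L := by rw [hjq]; linarith
    have hclose : dist (X (q j) ω) (X u ω) < β := by
      apply hηprop
      rw [Real.dist_eq, hjq, abs_of_neg (by linarith)]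
      have := lt_of_le_of_lt (le_max_right (aa k) (u - η)) hr1
      linarith
    have hcb : |X (q j) ω i - X u ω i| ≤ dist (X (q j) ω) (X u ω) := by
      rw [EuclideanSpace.dist_eq]
      have h1 : |X (q j) ω i - X u ω i| = Real.sqrt (dist (X (q j) ω i) (X u ω i)^2) := by
        rw [Real.dist_eq, Real.sqrt_sq_eq_abs, abs_abs]
      rw [h1]
      apply Real.sqrt_le_sqrt
      exact Finset.single_le_sum (f := fun i => dist (X (q j) ω i) (X u ω i)^2)
        (fun i _ => sq_nonneg _) (Finset.mem_univ i)
    have hfinal : α ≤ |X (q j) ω i - X (aa k) ω i| := by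
      have h2 : |X u ω i - X (aa k) ω i| - |X u ω i - X (q j) ω i|
          ≤ |X (q j) ω i - X (aa k) ω i| := by
        have h3 := abs_sub_abs_le_abs_sub (X u ω i - X (aa k) ω i) (X u ω i - X (q j) ω i)
        have heq : (X u ω i - X (aa k) ω i) - (X u ω i - X (q j) ω i)
            = X (q j) ω i - X (aa k) ω i := by ring
        rw [heq] at h3
        linarith
      have h3 : |X (q j) ω i - X u ω i| < β := lt_of_le_of_lt hcb hclose
      have h4 : |X u ω i - X (q j) ω i| = |X (q j) ω i - X u ω i| := abs_sub_comm _ _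
      rw [hβdef] at h3
      linarith
    refine mem_biUnion (Finset.mem_range.mpr hkn) ?_
    refine mem_iUnion.mpr ⟨i, ?_⟩
    refine mem_iUnion.mpr ⟨j+1, ?_⟩
    refine ⟨j, Nat.lt_succ_self j, ?_⟩
    have huuq : uu k j = q j := by
      rw [huudef]; simp only; rw [if_pos ⟨hrA, hrL⟩]
    rw [huuq]
    exact hfinal
  -- global inclusion
  have hmainsub : {ω | ∃ s ∈ Icc (0:ℝ) 1, ∃ t ∈ Icc (0:ℝ) 1,
        |t - s| < δ ∧ ε < dist (X s ω) (X t ω)}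
      ⊆ Bad ∪ ⋃ k ∈ Finset.range n, ⋃ i : Fin d, EVU k i := by
    intro ω hω
    by_cases hcont : Continuous fun r => X r ω
    · right
      obtain ⟨s, hs, t, ht, hlt, hdist⟩ := hω
      rcases le_total s t with hst | hst
      · exact key ω hcont s t hs ht hst (lt_of_le_of_lt (le_abs_self _) hlt) hdist
      · refine key ω hcont t s ht hs hst ?_ (by rwa [dist_comm] at hdist)
        rw [abs_sub_comm] at hlt
        exact lt_of_le_of_lt (le_abs_self _) hlt
    · left; exact hcont
  -- final computation
  have hexp : -(α^2)/(2*L) = -(ε^2 / (10 * (d:ℝ) * δ)) := by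
    rw [hαdef, hLdef, div_pow, mul_pow, Real.sq_sqrt (Nat.cast_nonneg d)]
    have hdne : ((d:ℝ)) ≠ 0 := by positivity
    have hδne : δ ≠ 0 := ne_of_gt hδ0
    field_simp
    ring
  have h5 : 2 ≤ Real.sqrt 5 := by
    nlinarith [Real.sq_sqrt (by norm_num : (0:ℝ) ≤ 5), Real.sqrt_nonneg 5]
  have hnd : (n:ℝ) * δ ≤ 2 * Real.sqrt 5 := by
    have hK : (K:ℝ) ≤ 4*c/δ := Nat.floor_le (by positivity)
    have hKd : (K:ℝ) * δ ≤ 4 * c := by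
      have h1 := mul_le_mul_of_nonneg_right hK hδ0.le
      rwa [div_mul_cancel₀ _ (ne_of_gt hδ0)] at h1
    have hnn : (n:ℝ) = (K:ℝ) + 2 := by rw [hndef]; push_cast; ring
    rcases le_or_gt (1 - L) 0 with hcase | hcase
    · have hc : c = 0 := max_eq_right hcase
      rw [hnn]; nlinarith
    · have hc : c = 1 - L := max_eq_left hcase.le
      rw [hnn, hLdef] at *
      nlinarith
  calc P {ω | ∃ s ∈ Icc (0:ℝ) 1, ∃ t ∈ Icc (0:ℝ) 1,
        |t - s| < δ ∧ ε < dist (X s ω) (X t ω)}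
      ≤ P (Bad ∪ ⋃ k ∈ Finset.range n, ⋃ i : Fin d, EVU k i) := measure_mono hmainsub
    _ ≤ P Bad + P (⋃ k ∈ Finset.range n, ⋃ i : Fin d, EVU k i) := measure_union_le _ _
    _ = P (⋃ k ∈ Finset.range n, ⋃ i : Fin d, EVU k i) := by rw [hBad0, zero_add]
    _ ≤ ∑ k ∈ Finset.range n, P (⋃ i : Fin d, EVU k i) := measure_biUnion_finset_le _ _
    _ ≤ ∑ k ∈ Finset.range n, ∑ i : Fin d, P (EVU k i) :=
        Finset.sum_le_sum (fun k _ => measure_iUnion_fintype_le _ _)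
    _ ≤ ∑ _k ∈ Finset.range n, ∑ _i : Fin d, ENNReal.ofReal (2 * Real.exp (-(α^2)/(2*L))) :=
        Finset.sum_le_sum (fun k _ => Finset.sum_le_sum (fun i _ => hEVUbound k i))
    _ = (n : ℝ≥0∞) * ((d : ℝ≥0∞) * ENNReal.ofReal (2 * Real.exp (-(α^2)/(2*L)))) := by
        rw [Finset.sum_const, Finset.sum_const, Finset.card_range, Finset.card_univ,
          Fintype.card_fin, nsmul_eq_mul, nsmul_eq_mul]
    _ ≤ ENNReal.ofReal (4 * Real.sqrt 5 * ((d : ℝ) / δ) *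
        Real.exp (-(ε ^ 2 / (10 * (d : ℝ) * δ)))) := by
        rw [hexp]
        rw [show (n:ℝ≥0∞) = ENNReal.ofReal (n:ℝ) from (ENNReal.ofReal_natCast n).symm,
          show ((d:ℕ):ℝ≥0∞) = ENNReal.ofReal (d:ℝ) from (ENNReal.ofReal_natCast d).symm,
          ← ENNReal.ofReal_mul (by positivity), ← ENNReal.ofReal_mul (by positivity)]
        apply ENNReal.ofReal_le_ofReal
        have h1 : (n:ℝ) ≤ 2*Real.sqrt 5/δ := by
          rw [le_div_iff₀ hδ0]; exact hnd
        calc (n:ℝ) * ((d:ℝ) * (2 * Real.exp (-(ε ^ 2 / (10 * (d:ℝ) * δ)))))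
            ≤ (2*Real.sqrt 5/δ) * ((d:ℝ) * (2 * Real.exp (-(ε ^ 2 / (10 * (d:ℝ) * δ))))) := by
              apply mul_le_mul_of_nonneg_right h1 (by positivity)
          _ = 4 * Real.sqrt 5 * ((d : ℝ) / δ) * Real.exp (-(ε ^ 2 / (10 * (d : ℝ) * δ))) := by
              ring
end
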